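/- Let g : [0,1] → ℝ be continuous with g ≥ 0 and g(0) = g(1) = 0. Then for every a, b ∈ T_g there exists a unique isometric map f_{a,b} : [0, d_g(a,b)] → T_g (i.e. d_g(f_{a,b}(x), f_{a,b}(y)) = |x − y| for all x, y ∈ [0, d_g(a,b)]) such that f_{a,b}(0) = a and f_{a,b}(d_g(a,b)) = b. -/

import Mathlib

/-- The minimum of `g` over the interval between `s` and `t`. -/
noncomputable def mg (g : ℝ → ℝ) (s t : ℝ) : ℝ :=
  sInf (g '' Set.Icc (min s t) (max s t))

/-- The pseudo-distance `d_g(s,t) = g(s) + g(t) - 2 m_g(s,t)`. -/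
noncomputable def dg (g : ℝ → ℝ) (s t : ℝ) : ℝ :=
  g s + g t - 2 * mg g s t

open Set

section aux
variable {g : ℝ → ℝ}


lemma mg_comm (g : ℝ → ℝ) (s t : ℝ) : mg g s t = mg g t s := by
  simp [mg, min_comm, max_comm]

lemma dg_comm (g : ℝ → ℝ) (s t : ℝ) : dg g s t = dg g t s := by
  simp [dg, mg_comm]; ring

lemma mg_img_nonempty (g : ℝ → ℝ) (s t : ℝ) : (g '' Icc (min s t) (max s t)).Nonempty :=
  (nonempty_Icc.2 min_le_max).image g

lemma mg_bdd (hcont : ContinuousOn g (Set.Icc 0 1)) {s t : ℝ} (hs : s ∈ Icc (0:ℝ) 1) (ht : t ∈ Icc (0:ℝ) 1) :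
    BddBelow (g '' Icc (min s t) (max s t)) := by
  have hsub : Icc (min s t) (max s t) ⊆ Icc (0:ℝ) 1 := by
    apply Icc_subset_Icc
    · exact le_min hs.1 ht.1
    · exact max_le hs.2 ht.2
  exact ((isCompact_Icc.image_of_continuousOn (hcont.mono hsub)).bddBelow)

lemma mg_le (hcont : ContinuousOn g (Set.Icc 0 1)) {s t w : ℝ} (hs : s ∈ Icc (0:ℝ) 1) (ht : t ∈ Icc (0:ℝ) 1)
    (hw : w ∈ Icc (min s t) (max s t)) : mg g s t ≤ g w :=
  csInf_le (mg_bdd hcont hs ht) (mem_image_of_mem g hw)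

lemma le_mg {s t c : ℝ} (h : ∀ w ∈ Icc (min s t) (max s t), c ≤ g w) : c ≤ mg g s t := by
  apply le_csInf (mg_img_nonempty g s t)
  rintro y ⟨w, hw, rfl⟩
  exact h w hw

lemma mg_exists_min (hcont : ContinuousOn g (Set.Icc 0 1)) {s t : ℝ} (hs : s ∈ Icc (0:ℝ) 1) (ht : t ∈ Icc (0:ℝ) 1) :
    ∃ w ∈ Icc (min s t) (max s t), g w = mg g s t := by
  have hsub : Icc (min s t) (max s t) ⊆ Icc (0:ℝ) 1 :=
    Icc_subset_Icc (le_min hs.1 ht.1) (max_le hs.2 ht.2)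
  have hc : IsCompact (g '' Icc (min s t) (max s t)) :=
    isCompact_Icc.image_of_continuousOn (hcont.mono hsub)
  have := hc.sInf_mem (mg_img_nonempty g s t)
  obtain ⟨w, hw, hgw⟩ := this
  exact ⟨w, hw, hgw⟩

lemma mg_self (g : ℝ → ℝ) (s : ℝ) : mg g s s = g s := by
  simp [mg]

lemma dg_self (g : ℝ → ℝ) (s : ℝ) : dg g s s = 0 := by
  simp [dg, mg_self]; ring

lemma mg_subinterval (hcont : ContinuousOn g (Set.Icc 0 1)) {s t a b' : ℝ} (hs : s ∈ Icc (0:ℝ) 1) (ht : t ∈ Icc (0:ℝ) 1)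
    (hsub : Icc (min a b') (max a b') ⊆ Icc (min s t) (max s t)) :
    mg g s t ≤ mg g a b' :=
  csInf_le_csInf (mg_bdd hcont hs ht) (mg_img_nonempty g a b') (image_mono (f := g) hsub)

-- interval covering
lemma icc_cover (x y z : ℝ) :
    Icc (min x z) (max x z) ⊆ Icc (min x y) (max x y) ∪ Icc (min y z) (max y z) := by
  intro w hw
  obtain ⟨h1, h2⟩ := hw
  rcases le_total w y with h | h <;> rcases le_total x z with h3 | h3
  · left
    constructor
    · exact le_trans (min_le_left x y) (by simpa [min_eq_left h3] using h1)
    · exact le_trans h (le_max_right x y)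
  · right
    constructor
    · exact le_trans (min_le_right y z) (by simpa [min_eq_right h3] using h1)
    · exact le_trans h (le_max_left y z)
  · right
    constructor
    · exact le_trans (min_le_left y z) h
    · exact le_trans (by simpa [max_eq_right h3] using h2) (le_max_right y z)
  · left
    constructor
    · exact le_trans (min_le_right x y) h
    · exact le_trans (by simpa [max_eq_left h3] using h2) (le_max_left x y)

lemma four_alg {P Q a1 a2 b1 b2 : ℝ} (h1 : min a1 b2 ≤ P) (h2 : min b1 a2 ≤ P)
    (h3 : min a1 b1 ≤ Q) (h4 : min a2 b2 ≤ Q) :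
    min (a1 + a2) (b1 + b2) ≤ P + Q := by
  rcases le_total a1 b2 with h | h <;> rcases le_total b1 a2 with h' | h' <;>
    rcases le_total a1 b1 with h'' | h'' <;> rcases le_total a2 b2 with h''' | h''' <;>
    simp only [min_le_iff, min_def] at * <;> split_ifs at * <;>
    linarith

lemma mg_min3 (hcont : ContinuousOn g (Set.Icc 0 1)) {x y z : ℝ}
    (hx : x ∈ Icc (0:ℝ) 1) (hy : y ∈ Icc (0:ℝ) 1) (hz : z ∈ Icc (0:ℝ) 1) :
    min (mg g x y) (mg g y z) ≤ mg g x z := by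
  have hb1 : BddBelow (g '' Icc (min x y) (max x y)) := mg_bdd hcont hx hy
  have hb2 : BddBelow (g '' Icc (min y z) (max y z)) := mg_bdd hcont hy hz
  have hsub : g '' Icc (min x z) (max x z) ⊆
      g '' Icc (min x y) (max x y) ∪ g '' Icc (min y z) (max y z) := by
    rw [← image_union]
    exact image_mono (f := g) (icc_cover x y z)
  calc min (mg g x y) (mg g y z)
      = sInf (g '' Icc (min x y) (max x y) ∪ g '' Icc (min y z) (max y z)) := by
        rw [csInf_union hb1 (mg_img_nonempty g x y) hb2 (mg_img_nonempty g y z)]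
        rfl
    _ ≤ mg g x z := csInf_le_csInf (hb1.union hb2) (mg_img_nonempty g x z) hsub

lemma dg_fourpoint (hcont : ContinuousOn g (Set.Icc 0 1)) {s t u v : ℝ}
    (hs : s ∈ Icc (0:ℝ) 1) (ht : t ∈ Icc (0:ℝ) 1) (hu : u ∈ Icc (0:ℝ) 1)
    (hv : v ∈ Icc (0:ℝ) 1) :
    dg g s t + dg g u v ≤ max (dg g s u + dg g t v) (dg g s v + dg g t u) := by
  have key : min (mg g s u + mg g t v) (mg g s v + mg g t u) ≤ mg g s t + mg g u v := by
    apply four_alg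
    · have := mg_min3 hcont hs hu ht
      rwa [mg_comm g u t] at this
    · have := mg_min3 hcont hs hv ht
      rwa [mg_comm g v t] at this
    · have := mg_min3 hcont hu hs hv
      rwa [mg_comm g u s] at this
    · have := mg_min3 hcont hu ht hv
      rwa [mg_comm g u t, min_comm] at this
  rw [le_max_iff]
  rw [min_le_iff] at key
  rcases key with h | h
  · left; simp only [dg]; linarith
  · right; simp only [dg]; linarith

lemma exists_arc (hcont : ContinuousOn g (Set.Icc 0 1)) {s t : ℝ}
    (hs : s ∈ Icc (0:ℝ) 1) (ht : t ∈ Icc (0:ℝ) 1) (hst : s ≤ t) :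
    ∃ F : ℝ → ℝ, (∀ x ∈ Icc 0 (dg g s t), F x ∈ Icc s t) ∧
      dg g (F 0) s = 0 ∧ dg g (F (dg g s t)) t = 0 ∧
      (∀ x ∈ Icc 0 (dg g s t), ∀ y ∈ Icc 0 (dg g s t), dg g (F x) (F y) = |x - y|) := by
  have hsub : Icc s t ⊆ Icc (0:ℝ) 1 := Icc_subset_Icc hs.1 ht.2
  have hmin : min s t = s := min_eq_left hst
  have hmax : max s t = t := max_eq_right hst
  set m := mg g s t with hm
  have hmem01 : ∀ {r : ℝ}, r ∈ Icc s t → r ∈ Icc (0:ℝ) 1 := fun hr => hsub hr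
  have hsmem : s ∈ Icc (min s t) (max s t) := by rw [hmin, hmax]; exact ⟨le_rfl, hst⟩
  have htmem : t ∈ Icc (min s t) (max s t) := by rw [hmin, hmax]; exact ⟨hst, le_rfl⟩
  have hms : m ≤ g s := mg_le hcont hs ht hsmem
  have hmt : m ≤ g t := mg_le hcont hs ht htmem
  set A : ℝ → Set ℝ := fun c => {r | r ∈ Icc s t ∧ g r ≤ c} with hA
  have hAsub : ∀ c, A c ⊆ Icc s t := fun c r hr => hr.1
  have hAne : ∀ c, m ≤ c → (A c).Nonempty := by
    intro c hc
    obtain ⟨w, hw, hgw⟩ := mg_exists_min hcont hs ht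
    rw [hmin, hmax] at hw
    exact ⟨w, hw, by rw [hgw]; exact hc⟩
  have hAcomp : ∀ c, IsCompact (A c) := by
    intro c
    apply IsCompact.of_isClosed_subset isCompact_Icc _ (hAsub c)
    have : A c = Icc s t ∩ g ⁻¹' (Iic c) := rfl
    rw [this]
    exact (hcont.mono hsub).preimage_isClosed_of_isClosed isClosed_Icc isClosed_Iic
  set u : ℝ → ℝ := fun c => sInf (A c) with hu
  set v : ℝ → ℝ := fun c => sSup (A c) with hv
  have hu_mem : ∀ c, m ≤ c → u c ∈ A c := fun c hc => (hAcomp c).sInf_mem (hAne c hc)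
  have hv_mem : ∀ c, m ≤ c → v c ∈ A c := fun c hc => (hAcomp c).sSup_mem (hAne c hc)
  have hu_lb : ∀ c r, r ∈ A c → u c ≤ r := fun c r hr =>
    csInf_le ((hAcomp c).bddBelow) hr
  have hv_ub : ∀ c r, r ∈ A c → r ≤ v c := fun c r hr =>
    le_csSup ((hAcomp c).bddAbove) hr
  -- points strictly before `u c` have `g > c`
  have key1 : ∀ c, m ≤ c → ∀ r, s ≤ r → r < u c → c < g r := by
    intro c hc r hsr hr
    by_contra hgr
    push_neg at hgr
    have hrt : r ≤ t := hr.le.trans ((hu_mem c hc).1.2)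
    exact absurd (hu_lb c r ⟨⟨hsr, hrt⟩, hgr⟩) (not_le.2 hr)
  have kv1 : ∀ c, m ≤ c → ∀ r, r ≤ t → v c < r → c < g r := by
    intro c hc r hrt hr
    by_contra hgr
    push_neg at hgr
    have hsr : s ≤ r := ((hv_mem c hc).1.1).trans hr.le
    exact absurd (hv_ub c r ⟨⟨hsr, hrt⟩, hgr⟩) (not_le.2 hr)
  -- value of `g` at `u c`
  have key2 : ∀ c, m ≤ c → c ≤ g s → g (u c) = c := by
    intro c hc hcs
    have hmem := hu_mem c hc
    have h1 : g (u c) ≤ c := hmem.2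
    rcases eq_or_lt_of_le hmem.1.1 with heq | hlt
    · rw [← heq] at h1 ⊢
      exact le_antisymm h1 hcs
    · refine le_antisymm h1 ?_
      have cw : ContinuousWithinAt g (Icc (0:ℝ) 1) (u c) := hcont _ (hmem01 hmem.1)
      have cw' : ContinuousWithinAt g (Ico s (u c)) (u c) := by
        apply cw.mono
        intro r hr
        exact hmem01 ⟨hr.1, hr.2.le.trans hmem.1.2⟩
      have hne : (nhdsWithin (u c) (Ico s (u c))).NeBot := by
        rw [← mem_closure_iff_nhdsWithin_neBot, closure_Ico (ne_of_lt hlt)]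
        exact ⟨hlt.le, le_rfl⟩
      exact ge_of_tendsto cw'
        (eventually_nhdsWithin_of_forall fun r hr => (key1 c hc r hr.1 hr.2).le)
  have kv2 : ∀ c, m ≤ c → c ≤ g t → g (v c) = c := by
    intro c hc hct
    have hmem := hv_mem c hc
    have h1 : g (v c) ≤ c := hmem.2
    rcases eq_or_lt_of_le hmem.1.2 with heq | hlt
    · rw [heq] at h1 ⊢
      exact le_antisymm h1 hct
    · refine le_antisymm h1 ?_
      have cw : ContinuousWithinAt g (Icc (0:ℝ) 1) (v c) := hcont _ (hmem01 hmem.1)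
      have cw' : ContinuousWithinAt g (Ioc (v c) t) (v c) := by
        apply cw.mono
        intro r hr
        exact hmem01 ⟨hmem.1.1.trans hr.1.le, hr.2⟩
      have hne : (nhdsWithin (v c) (Ioc (v c) t)).NeBot := by
        rw [← mem_closure_iff_nhdsWithin_neBot, closure_Ioc (ne_of_lt hlt)]
        exact ⟨le_rfl, hlt.le⟩
      exact ge_of_tendsto cw'
        (eventually_nhdsWithin_of_forall fun r hr => (kv1 c hc r hr.2 hr.1).le)
  -- min of g over [s, u c] is c
  have key3 : ∀ c, m ≤ c → c ≤ g s → mg g s (u c) = c := by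
    intro c hc hcs
    have hmem := hu_mem c hc
    have hmin2 : min s (u c) = s := min_eq_left hmem.1.1
    have hmax2 : max s (u c) = u c := max_eq_right hmem.1.1
    refine le_antisymm ?_ ?_
    · have := mg_le hcont hs (hmem01 hmem.1) (w := u c) (by rw [hmin2, hmax2]; exact ⟨hmem.1.1, le_rfl⟩)
      rw [key2 c hc hcs] at this
      exact this
    · apply le_mg
      intro w hw
      rw [hmin2, hmax2] at hw
      rcases eq_or_lt_of_le hw.2 with heq | hlt
      · rw [heq, key2 c hc hcs]
      · exact (key1 c hc w hw.1 hlt).le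
  have kv3 : ∀ c, m ≤ c → c ≤ g t → mg g (v c) t = c := by
    intro c hc hct
    have hmem := hv_mem c hc
    have hmin2 : min (v c) t = v c := min_eq_left hmem.1.2
    have hmax2 : max (v c) t = t := max_eq_right hmem.1.2
    refine le_antisymm ?_ ?_
    · have := mg_le hcont (hmem01 hmem.1) ht (w := v c) (by rw [hmin2, hmax2]; exact ⟨le_rfl, hmem.1.2⟩)
      rw [kv2 c hc hct] at this
      exact this
    · apply le_mg
      intro w hw
      rw [hmin2, hmax2] at hw
      rcases eq_or_lt_of_le hw.1 with heq | hlt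
      · rw [← heq, kv2 c hc hct]
      · exact (kv1 c hc w hw.2 hlt).le
  -- monotonicity
  have hAmono2 : ∀ c c' : ℝ, c' ≤ c → A c' ⊆ A c := by
    intro c c' hcc r hr
    exact ⟨hr.1, hr.2.trans hcc⟩
  have key4 : ∀ c c', m ≤ c' → c' ≤ c → u c ≤ u c' :=
    fun c c' hc' hcc => hu_lb c (u c') (hAmono2 c c' hcc (hu_mem c' hc'))
  have kv4 : ∀ c c', m ≤ c' → c' ≤ c → v c' ≤ v c :=
    fun c c' hc' hcc => hv_ub c (v c') (hAmono2 c c' hcc (hv_mem c' hc'))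
  have humvm : u m ≤ v m :=
    csInf_le_csSup (hAne m le_rfl) ((hAcomp m).bddBelow) ((hAcomp m).bddAbove)
  -- distance formulas
  have duu : ∀ c c', m ≤ c' → c' ≤ c → c ≤ g s → dg g (u c) (u c') = c - c' := by
    intro c c' hc' hcc hcs
    have hc : m ≤ c := hc'.trans hcc
    have hle : u c ≤ u c' := key4 c c' hc' hcc
    have hmin2 : min (u c) (u c') = u c := min_eq_left hle
    have hmax2 : max (u c) (u c') = u c' := max_eq_right hle
    have hmg : mg g (u c) (u c') = c' := by
      refine le_antisymm ?_ ?_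
      · have := mg_le hcont (hmem01 (hu_mem c hc).1) (hmem01 (hu_mem c' hc').1)
          (w := u c') (by rw [hmin2, hmax2]; exact ⟨hle, le_rfl⟩)
        rwa [key2 c' hc' (hcc.trans hcs)] at this
      · apply le_mg
        intro w hw
        rw [hmin2, hmax2] at hw
        rcases eq_or_lt_of_le hw.2 with heq | hlt
        · rw [heq, key2 c' hc' (hcc.trans hcs)]
        · exact (key1 c' hc' w ((hu_mem c hc).1.1.trans hw.1) hlt).le
    rw [dg, hmg, key2 c hc hcs, key2 c' hc' (hcc.trans hcs)]
    ring
  have dvv : ∀ c c', m ≤ c' → c' ≤ c → c ≤ g t → dg g (v c) (v c') = c - c' := by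
    intro c c' hc' hcc hct
    have hc : m ≤ c := hc'.trans hcc
    have hle : v c' ≤ v c := kv4 c c' hc' hcc
    have hmin2 : min (v c) (v c') = v c' := min_eq_right hle
    have hmax2 : max (v c) (v c') = v c := max_eq_left hle
    have hmg : mg g (v c) (v c') = c' := by
      refine le_antisymm ?_ ?_
      · have := mg_le hcont (hmem01 (hv_mem c hc).1) (hmem01 (hv_mem c' hc').1)
          (w := v c') (by rw [hmin2, hmax2]; exact ⟨le_rfl, hle⟩)
        rwa [kv2 c' hc' (hcc.trans hct)] at this
      · apply le_mg
        intro w hw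
        rw [hmin2, hmax2] at hw
        rcases eq_or_lt_of_le hw.1 with heq | hlt
        · rw [← heq, kv2 c' hc' (hcc.trans hct)]
        · exact (kv1 c' hc' w (hw.2.trans (hv_mem c hc).1.2) hlt).le
    rw [dg, hmg, kv2 c hc hct, kv2 c' hc' (hcc.trans hct)]
    ring
  have duv : ∀ c c', m ≤ c → c ≤ g s → m ≤ c' → c' ≤ g t →
      dg g (u c) (v c') = (c - m) + (c' - m) := by
    intro c c' hc hcs hc' hct
    have hle : u c ≤ v c' :=
      (key4 c m le_rfl hc).trans (humvm.trans (kv4 c' m le_rfl hc'))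
    have hmin2 : min (u c) (v c') = u c := min_eq_left hle
    have hmax2 : max (u c) (v c') = v c' := max_eq_right hle
    have hum : u m ∈ Icc (min (u c) (v c')) (max (u c) (v c')) := by
      rw [hmin2, hmax2]
      exact ⟨key4 c m le_rfl hc, humvm.trans (kv4 c' m le_rfl hc')⟩
    have hmg : mg g (u c) (v c') = m := by
      refine le_antisymm ?_ ?_
      · have := mg_le hcont (hmem01 (hu_mem c hc).1) (hmem01 (hv_mem c' hc').1) hum
        rwa [key2 m le_rfl hms] at this
      · rw [hm]
        apply mg_subinterval hcont hs ht
        rw [hmin2, hmax2, hmin, hmax]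
        exact Icc_subset_Icc (hu_mem c hc).1.1 (hv_mem c' hc').1.2
    rw [dg, hmg, key2 c hc hcs, kv2 c' hc' hct]
    ring
  -- the path
  set xs := g s - m with hxs
  set xt := g t - m with hxt
  have hxs0 : 0 ≤ xs := by simp [hxs]; linarith
  have hxt0 : 0 ≤ xt := by simp [hxt]; linarith
  have hd : dg g s t = xs + xt := by rw [dg, hxs, hxt, ← hm]; ring
  refine ⟨fun x => if x ≤ xs then u (g s - x) else v (g t - (dg g s t - x)), ?_, ?_, ?_, ?_⟩
  · -- range
    intro x hx
    by_cases hxx : x ≤ xs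
    · simp only [if_pos hxx]
      exact (hu_mem (g s - x) (by linarith [hx.1])).1
    · simp only [if_neg hxx]
      push_neg at hxx
      refine (hv_mem (g t - (dg g s t - x)) ?_).1
      have := hx.2
      rw [hd] at this
      linarith
  · -- start point
    simp only [if_pos hxs0, sub_zero]
    have h2 := key2 (g s) hms le_rfl
    have h3 := key3 (g s) hms le_rfl
    rw [dg, h2, mg_comm, h3]
    ring
  · -- end point
    by_cases hdx : dg g s t ≤ xs
    · -- then xt = 0
      have hxt00 : xt = 0 := by rw [hd] at hdx; linarith
      simp only [if_pos hdx]
      have hcmem : m ≤ g s - dg g s t := by rw [hd]; linarith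
      have hcs : g s - dg g s t ≤ g s := by rw [hd]; linarith
      have hgu := key2 _ hcmem hcs
      have hgt : g t = m := by rw [hxt] at hxt00; linarith
      have humem := (hu_mem _ hcmem).1
      have hmin2 : min (u (g s - dg g s t)) t = u (g s - dg g s t) := min_eq_left humem.2
      have hmax2 : max (u (g s - dg g s t)) t = t := max_eq_right humem.2
      have hmg : mg g (u (g s - dg g s t)) t = m := by
        refine le_antisymm ?_ ?_
        · have := mg_le hcont (hmem01 humem) ht (w := t)
            (by rw [hmin2, hmax2]; exact ⟨humem.2, le_rfl⟩)
          rwa [hgt] at this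
        · rw [hm]
          apply mg_subinterval hcont hs ht
          rw [hmin2, hmax2, hmin, hmax]
          exact Icc_subset_Icc humem.1 le_rfl
      rw [dg, hmg, hgu, hgt, hd, hxt00]
      ring
    · simp only [if_neg hdx, sub_self, sub_zero]
      have h2 := kv2 (g t) hmt le_rfl
      have h3 := kv3 (g t) hmt le_rfl
      rw [dg, h2, h3]
      ring
  · -- isometry
    have main : ∀ x ∈ Icc (0:ℝ) (dg g s t), ∀ y ∈ Icc (0:ℝ) (dg g s t), x ≤ y →
        dg g (if x ≤ xs then u (g s - x) else v (g t - (dg g s t - x)))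
             (if y ≤ xs then u (g s - y) else v (g t - (dg g s t - y))) = y - x := by
      intro x hx y hy hxy
      have hdxy := hy.2
      rw [hd] at hdxy
      by_cases hxx : x ≤ xs <;> by_cases hyy : y ≤ xs
      · simp only [if_pos hxx, if_pos hyy]
        have := duu (g s - x) (g s - y) (by linarith) (by linarith) (by linarith [hx.1])
        rw [this]; ring
      · simp only [if_pos hxx, if_neg hyy]
        push_neg at hyy
        have := duv (g s - x) (g t - (dg g s t - y)) (by linarith) (by linarith [hx.1])
          (by linarith) (by linarith)
        rw [this, hd]; ring
      · exact absurd (hxy.trans hyy) hxx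
      · simp only [if_neg hxx, if_neg hyy]
        push_neg at hxx hyy
        have hx2 := hx.2; rw [hd] at hx2
        have := dvv (g t - (dg g s t - y)) (g t - (dg g s t - x))
          (by linarith) (by linarith) (by linarith)
        rw [dg_comm, this, hd]; ring
    intro x hx y hy
    rcases le_total x y with hxy | hxy
    · rw [main x hx y hy hxy, abs_of_nonpos (by linarith)]
      ring
    · rw [dg_comm, main y hy x hx hxy, abs_of_nonneg (by linarith)]


/-- In the tree `T_g` (a metric space `T` with surjection `p : [0,1] → T` realizing the
distances `d_g`), for any two points `a,b` there is a unique isometric map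
`f : [0, d(a,b)] → T` with `f 0 = a` and `f (d(a,b)) = b`. -/
theorem unique_isometric_arc
    (g : ℝ → ℝ) (hcont : ContinuousOn g (Set.Icc 0 1))
    (hnonneg : ∀ x ∈ Set.Icc (0:ℝ) 1, 0 ≤ g x)
    (h0 : g 0 = 0) (h1 : g 1 = 0)
    (T : Type*) [MetricSpace T] (p : Set.Icc (0:ℝ) 1 → T)
    (hsurj : Function.Surjective p)
    (hdist : ∀ s t : Set.Icc (0:ℝ) 1, dist (p s) (p t) = dg g s t)
    (a b : T) :
    ∃! f : Set.Icc (0:ℝ) (dist a b) → T,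
      (∀ x y : Set.Icc (0:ℝ) (dist a b), dist (f x) (f y) = |(x : ℝ) - (y : ℝ)|) ∧
      f ⟨0, le_rfl, dist_nonneg⟩ = a ∧ f ⟨dist a b, dist_nonneg, le_rfl⟩ = b := by
  obtain ⟨s₀, hps⟩ := hsurj a
  obtain ⟨t₀, hpt⟩ := hsurj b
  have hdab : dist a b = dg g s₀ t₀ := by rw [← hps, ← hpt]; exact hdist s₀ t₀
  -- existence
  have hex : ∃ f : Set.Icc (0:ℝ) (dist a b) → T,
      (∀ x y : Set.Icc (0:ℝ) (dist a b), dist (f x) (f y) = |(x : ℝ) - (y : ℝ)|) ∧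
      f ⟨0, le_rfl, dist_nonneg⟩ = a ∧ f ⟨dist a b, dist_nonneg, le_rfl⟩ = b := by
    rcases le_total (s₀ : ℝ) (t₀ : ℝ) with hst | hst
    · obtain ⟨F, hrange, hF0, hFd, hiso⟩ := exists_arc hcont s₀.2 t₀.2 hst
      have hsubst : Icc (s₀:ℝ) (t₀:ℝ) ⊆ Icc (0:ℝ) 1 := Icc_subset_Icc s₀.2.1 t₀.2.2
      have hmem : ∀ x : Set.Icc (0:ℝ) (dist a b), (x:ℝ) ∈ Icc 0 (dg g s₀ t₀) := by
        intro x; rw [← hdab]; exact x.2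
      refine ⟨fun x => p ⟨F x, hsubst (hrange x (hmem x))⟩, ?_, ?_, ?_⟩
      · intro x y
        rw [hdist]
        exact hiso x (hmem x) y (hmem y)
      · refine Eq.trans ?_ hps
        apply dist_eq_zero.1
        simp only [hdist]
        exact hF0
      · refine Eq.trans ?_ hpt
        apply dist_eq_zero.1
        simp only [hdist]
        have := hFd
        rw [← hdab] at this
        exact this
    · obtain ⟨F, hrange, hF0, hFd, hiso⟩ := exists_arc hcont t₀.2 s₀.2 hst
      have hsubst : Icc (t₀:ℝ) (s₀:ℝ) ⊆ Icc (0:ℝ) 1 := Icc_subset_Icc t₀.2.1 s₀.2.2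
      have hdab' : dist a b = dg g t₀ s₀ := by rw [hdab, dg_comm]
      have hmem : ∀ x : Set.Icc (0:ℝ) (dist a b),
          dist a b - (x:ℝ) ∈ Icc 0 (dg g t₀ s₀) := by
        intro x
        rw [← hdab']
        exact ⟨by linarith [x.2.2], by linarith [x.2.1]⟩
      refine ⟨fun x => p ⟨F (dist a b - x), hsubst (hrange _ (hmem x))⟩, ?_, ?_, ?_⟩
      · intro x y
        rw [hdist]
        have := hiso _ (hmem x) _ (hmem y)
        show dg g (F (dist a b - x)) (F (dist a b - y)) = _
        rw [this]
        rw [abs_sub_comm]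
        ring_nf
      · refine Eq.trans ?_ hps
        apply dist_eq_zero.1
        simp only [hdist]
        have := hFd
        rw [← hdab'] at this
        rw [sub_zero]
        exact this
      · refine Eq.trans ?_ hpt
        apply dist_eq_zero.1
        simp only [hdist]
        rw [sub_self]
        exact hF0
  obtain ⟨f, hf⟩ := hex
  refine ⟨f, hf, ?_⟩
  -- uniqueness via 0-hyperbolicity
  have hyp : ∀ w x y z : T, dist w x + dist y z ≤
      max (dist w y + dist x z) (dist w z + dist x y) := by
    intro w x y z
    obtain ⟨w', rfl⟩ := hsurj w
    obtain ⟨x', rfl⟩ := hsurj x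
    obtain ⟨y', rfl⟩ := hsurj y
    obtain ⟨z', rfl⟩ := hsurj z
    simp only [hdist]
    exact dg_fourpoint hcont w'.2 x'.2 y'.2 z'.2
  rintro f' ⟨hiso', h0', hd'⟩
  obtain ⟨hiso, h0f, hdf⟩ := hf
  funext x
  have hx0 : (0:ℝ) ≤ (x:ℝ) := x.2.1
  have hxd : (x:ℝ) ≤ dist a b := x.2.2
  have da' : dist a (f' x) = x := by
    have h := hiso' ⟨0, le_rfl, dist_nonneg⟩ x
    rw [h0'] at h
    rw [h]
    show |(0:ℝ) - (x:ℝ)| = (x:ℝ)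
    rw [zero_sub, abs_neg, abs_of_nonneg hx0]
  have db' : dist b (f' x) = dist a b - x := by
    have h := hiso' ⟨dist a b, dist_nonneg, le_rfl⟩ x
    rw [hd'] at h
    rw [h]
    show |dist a b - (x:ℝ)| = dist a b - (x:ℝ)
    rw [abs_of_nonneg (by linarith)]
  have da : dist a (f x) = x := by
    have h := hiso ⟨0, le_rfl, dist_nonneg⟩ x
    rw [h0f] at h
    rw [h]
    show |(0:ℝ) - (x:ℝ)| = (x:ℝ)
    rw [zero_sub, abs_neg, abs_of_nonneg hx0]
  have db : dist b (f x) = dist a b - x := by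
    have h := hiso ⟨dist a b, dist_nonneg, le_rfl⟩ x
    rw [hdf] at h
    rw [h]
    show |dist a b - (x:ℝ)| = dist a b - (x:ℝ)
    rw [abs_of_nonneg (by linarith)]
  have hk := hyp a b (f' x) (f x)
  rw [da', db, da, db', max_self] at hk
  have h2 : dist (f' x) (f x) ≤ 0 := by linarith
  exact dist_le_zero.1 h2
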